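/- If μ is a free Q⁺-measure on ℕ, then there is no shift-invariant measure ν with ν ≤_RB μ, and there is no measure ν with ν ≤_RB μ that extends the asymptotic density. -/

import Mathlib

open Filter

/-- A finitely additive probability measure defined on all subsets of `ℕ`. -/
def IsMeasure (μ : Set ℕ → ℝ) : Prop :=
  (∀ A : Set ℕ, 0 ≤ μ A ∧ μ A ≤ 1) ∧ μ Set.univ = 1 ∧
    ∀ A B : Set ℕ, Disjoint A B → μ (A ∪ B) = μ A + μ B

/-- A measure is free if it vanishes on finite sets. -/
def IsFree (μ : Set ℕ → ℝ) : Prop := ∀ A : Set ℕ, A.Finite → μ A = 0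

/-- A function is finite-to-one if all fibers are finite. -/
def FinToOne (f : ℕ → ℕ) : Prop := ∀ n : ℕ, (f ⁻¹' {n}).Finite

/-- Rudin-Blass reducibility: `ν ≤_RB μ` via a finite-to-one map. -/
def RBLe (ν μ : Set ℕ → ℝ) : Prop :=
  ∃ f : ℕ → ℕ, FinToOne f ∧ ∀ A : Set ℕ, μ (f ⁻¹' A) = ν A

/-- Rudin-Keisler reducibility: `ν ≤_RK μ`. -/
def RKLe (ν μ : Set ℕ → ℝ) : Prop :=
  ∃ f : ℕ → ℕ, ∀ A : Set ℕ, μ (f ⁻¹' A) = ν A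

/-- A measure is shift invariant if `μ(A + 1) = μ(A)`. -/
def ShiftInvariant (μ : Set ℕ → ℝ) : Prop :=
  ∀ A : Set ℕ, μ ((fun n => n + 1) '' A) = μ A

/-- A measure extends the asymptotic density. -/
def ExtendsDensity (μ : Set ℕ → ℝ) : Prop :=
  ∀ (A : Set ℕ) (d : ℝ),
    Tendsto (fun n : ℕ => ((A ∩ Set.Iio n).ncard : ℝ) / n) atTop (nhds d) → μ A = d

/-- A partition of `ℕ` indexed by `ℕ`. -/
def IsPartition (A : ℕ → Set ℕ) : Prop :=
  Pairwise (Function.onFun Disjoint A) ∧ (⋃ n, A n) = Set.univ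

/-- A selector of a partition: meets each piece in at most one point. -/
def IsSelector (S : Set ℕ) (A : ℕ → Set ℕ) : Prop :=
  ∀ n : ℕ, (S ∩ A n).Subsingleton

/-- A Q-measure: each partition into finite sets has a selector of full measure. -/
def IsQMeasure (μ : Set ℕ → ℝ) : Prop :=
  ∀ A : ℕ → Set ℕ, IsPartition A → (∀ n, (A n).Finite) →
    ∃ S : Set ℕ, IsSelector S A ∧ μ S = 1

/-- A Q⁺-measure: each partition into finite sets has a selector of positive measure. -/
def IsQPlusMeasure (μ : Set ℕ → ℝ) : Prop :=
  ∀ A : ℕ → Set ℕ, IsPartition A → (∀ n, (A n).Finite) →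
    ∃ S : Set ℕ, IsSelector S A ∧ 0 < μ S

/-- A P-measure: each partition has a pseudo-selector of the largest possible measure. -/
def IsPMeasure (μ : Set ℕ → ℝ) : Prop :=
  ∀ A : ℕ → Set ℕ, IsPartition A →
    ∃ S : Set ℕ, (∀ n, (S ∩ A n).Finite) ∧ μ S = 1 - ∑' n, μ (A n)

/-- A selective measure: each partition has a selector of the largest possible measure. -/
def IsSelectiveMeasure (μ : Set ℕ → ℝ) : Prop :=
  ∀ A : ℕ → Set ℕ, IsPartition A →
    ∃ S : Set ℕ, IsSelector S A ∧ μ S = 1 - ∑' n, μ (A n)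

/-- A non-atomic measure: finite partitions into pieces of arbitrarily small measure. -/
def NonAtomic (μ : Set ℕ → ℝ) : Prop :=
  ∀ ε : ℝ, 0 < ε → ∃ (N : ℕ) (P : Fin N → Set ℕ),
    Pairwise (Function.onFun Disjoint P) ∧ (⋃ i, P i) = Set.univ ∧ ∀ i, μ (P i) < ε

/-- The continuum hypothesis: `2 ^ ℵ₀ = ℵ₁`. -/
def CH : Prop := (2 : Cardinal.{0}) ^ Cardinal.aleph0.{0} = Cardinal.aleph.{0} 1



-- Auxiliary lemmas


-- triangular numbers
def auxTri : ℕ → ℕ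
  | 0 => 0
  | n+1 => auxTri n + (n+1)

lemma auxTri_succ (n : ℕ) : auxTri (n+1) = auxTri n + (n+1) := rfl

lemma two_auxTri (n : ℕ) : 2 * auxTri n = n * (n+1) := by
  induction n with
  | zero => rfl
  | succ n ih => rw [auxTri_succ]; ring_nf; ring_nf at ih; omega

lemma le_auxTri (n : ℕ) : n ≤ auxTri n := by
  induction n with
  | zero => simp
  | succ n ih => rw [auxTri_succ]; omega

lemma auxTri_mono {m n : ℕ} (h : m ≤ n) : auxTri m ≤ auxTri n :=
  monotone_nat_of_le_succ (fun k => by rw [auxTri_succ]; omega) h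

def auxIdx (x : ℕ) : ℕ := Nat.findGreatest (fun n => auxTri n ≤ x) x

lemma auxTri_auxIdx_le (x : ℕ) : auxTri (auxIdx x) ≤ x :=
  Nat.findGreatest_spec (P := fun n => auxTri n ≤ x) (Nat.zero_le x) (by show auxTri 0 ≤ x; simp [auxTri])

lemma lt_auxTri_auxIdx_succ (x : ℕ) : x < auxTri (auxIdx x + 1) := by
  by_contra h
  push_neg at h
  have h1 : auxIdx x + 1 ≤ x := le_trans (le_auxTri _) h
  exact Nat.findGreatest_is_greatest (Nat.lt_succ_self _) h1 h

lemma le_auxIdx {m x : ℕ} (h : auxTri m ≤ x) : m ≤ auxIdx x := by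
  by_contra hc
  push_neg at hc
  have := auxTri_mono (show auxIdx x + 1 ≤ m by omega)
  have := lt_auxTri_auxIdx_succ x
  omega

-- measure lemmas
lemma measure_empty {μ : Set ℕ → ℝ} (h : IsMeasure μ) : μ ∅ = 0 := by
  have := h.2.2 ∅ ∅ (disjoint_bot_left)
  simp at this
  linarith

lemma measure_mono {μ : Set ℕ → ℝ} (h : IsMeasure μ) {A B : Set ℕ} (hAB : A ⊆ B) :
    μ A ≤ μ B := by
  have hd : Disjoint A (B \ A) := Set.disjoint_sdiff_right
  have h2 := h.2.2 A (B \ A) hd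
  rw [Set.union_diff_cancel hAB] at h2
  have := (h.1 (B \ A)).1
  linarith

lemma measure_biUnion {μ : Set ℕ → ℝ} (h : IsMeasure μ) (g : ℕ → Set ℕ) (k : ℕ)
    (hd : ∀ i j, i < j → j < k → Disjoint (g i) (g j)) :
    μ (⋃ i ∈ Finset.range k, g i) = ∑ i ∈ Finset.range k, μ (g i) := by
  induction k with
  | zero => simp [measure_empty h]
  | succ k ih =>
    have hd' : ∀ i j, i < j → j < k → Disjoint (g i) (g j) := fun i j hij hj => hd i j hij (by omega)
    rw [Finset.sum_range_succ, ← ih hd']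
    have hu : (⋃ i ∈ Finset.range (k+1), g i) = (⋃ i ∈ Finset.range k, g i) ∪ g k := by
      ext x; simp [Finset.mem_range]
      constructor
      · rintro ⟨i, hi, hx⟩
        rcases Nat.lt_or_ge i k with h' | h'
        · exact Or.inl ⟨i, h', hx⟩
        · have : i = k := by omega
          subst this; exact Or.inr hx
      · rintro (⟨i, hi, hx⟩ | hx)
        · exact ⟨i, by omega, hx⟩
        · exact ⟨k, by omega, hx⟩
    rw [hu]
    apply h.2.2
    simp only [Set.disjoint_iUnion_left]
    intro i hi
    exact hd i k (Finset.mem_range.mp hi) (by omega)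

lemma finToOne_preimage {f : ℕ → ℕ} (hf : FinToOne f) {F : Set ℕ} (hF : F.Finite) :
    (f ⁻¹' F).Finite := by
  have : f ⁻¹' F = ⋃ n ∈ F, f ⁻¹' {n} := by ext x; simp
  rw [this]
  exact hF.biUnion (fun n _ => hf n)

lemma subsingleton_ncard_le_one {s : Set ℕ} (h : s.Subsingleton) : s.ncard ≤ 1 := by
  rcases h.eq_empty_or_singleton with h' | ⟨a, h'⟩ <;> simp [h']

lemma exists_sparse {μ ν : Set ℕ → ℝ} {f : ℕ → ℕ} (hμ : IsMeasure μ)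
    (hQ : IsQPlusMeasure μ) (hf : FinToOne f) (hpush : ∀ A, μ (f ⁻¹' A) = ν A) :
    ∃ T : Set ℕ, 0 < ν T ∧
      ∀ n, (T ∩ Set.Ico (auxTri n) (auxTri (n+1))).Subsingleton := by
  set A : ℕ → Set ℕ := fun n => f ⁻¹' (Set.Ico (auxTri n) (auxTri (n+1))) with hA
  have hpart : IsPartition A := by
    constructor
    · intro i j hij
      apply Disjoint.preimage
      rw [Set.disjoint_left]
      rintro x ⟨h1, h2⟩ ⟨h3, h4⟩
      rcases Nat.lt_or_ge i j with h | h
      · have := auxTri_mono (show i + 1 ≤ j by omega); omega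
      · have := auxTri_mono (show j + 1 ≤ i by omega); omega
    · ext x
      simp only [Set.mem_iUnion, Set.mem_univ, iff_true, hA, Set.mem_preimage,
        Set.mem_Ico]
      exact ⟨auxIdx (f x), auxTri_auxIdx_le _, lt_auxTri_auxIdx_succ _⟩
  have hfin : ∀ n, (A n).Finite := fun n =>
    finToOne_preimage hf (Set.finite_Ico _ _)
  obtain ⟨S, hsel, hpos⟩ := hQ A hpart hfin
  refine ⟨f '' S, ?_, ?_⟩
  · rw [← hpush]
    exact lt_of_lt_of_le hpos (measure_mono hμ (Set.subset_preimage_image f S))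
  · rintro n x ⟨⟨a, haS, rfl⟩, hx2⟩ y ⟨⟨b, hbS, rfl⟩, hy2⟩
    have : a = b := hsel n ⟨haS, hx2⟩ ⟨hbS, hy2⟩
    rw [this]

lemma no_shift {μ ν : Set ℕ → ℝ} {f : ℕ → ℕ} (hμ : IsMeasure μ) (hfree : IsFree μ)
    (hQ : IsQPlusMeasure μ) (hν : IsMeasure ν) (hSI : ShiftInvariant ν)
    (hf : FinToOne f) (hpush : ∀ A, μ (f ⁻¹' A) = ν A) : False := by
  obtain ⟨T, hTpos, hTsub⟩ := exists_sparse hμ hQ hf hpush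
  have hνfree : IsFree ν := fun F hF => by
    rw [← hpush]; exact hfree _ (finToOne_preimage hf hF)
  -- parity split
  set E : Set ℕ := T ∩ {x | auxIdx x % 2 = 0} with hE
  set O : Set ℕ := T ∩ {x | auxIdx x % 2 = 1} with hO
  have hTEO : T = E ∪ O := by
    ext x
    by_cases hx : x ∈ T <;> simp only [hE, hO, Set.mem_union, Set.mem_inter_iff,
      Set.mem_setOf_eq, hx, true_and, false_and, or_self, iff_true, iff_false]
    exact iff_of_true trivial (Nat.mod_two_eq_zero_or_one _)
  have hdisj : Disjoint E O := by
    rw [Set.disjoint_left]; rintro x ⟨_, h1⟩ ⟨_, h2⟩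
    simp only [Set.mem_setOf_eq] at h1 h2; omega
  have hsum : ν T = ν E + ν O := by rw [hTEO]; exact hν.2.2 _ _ hdisj
  obtain ⟨U, p, hUT, hUpar, hUpos⟩ :
      ∃ (U : Set ℕ) (p : ℕ), U ⊆ T ∧ (∀ x ∈ U, auxIdx x % 2 = p) ∧ 0 < ν U := by
    rcases lt_or_ge 0 (ν E) with h | h
    · exact ⟨E, 0, Set.inter_subset_left, fun x hx => hx.2, h⟩
    · refine ⟨O, 1, Set.inter_subset_left, fun x hx => hx.2, ?_⟩
      have := (hν.1 E).1; linarith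
  -- gap lemma
  have hgap : ∀ m : ℕ, ∀ x ∈ U, ∀ y ∈ U, y < x → auxTri m ≤ y → y + m < x := by
    intro m x hx y hy hyx hym
    have ham : m ≤ auxIdx y := le_auxIdx hym
    have hab : auxIdx y < auxIdx x := by
      by_contra hle
      push_neg at hle
      rcases eq_or_lt_of_le hle with heq | hlt
      · have := hTsub (auxIdx y)
          ⟨hUT hx, by rw [← heq]; exact Set.mem_Ico.mpr ⟨auxTri_auxIdx_le x, lt_auxTri_auxIdx_succ x⟩⟩
          ⟨hUT hy, Set.mem_Ico.mpr ⟨auxTri_auxIdx_le y, lt_auxTri_auxIdx_succ y⟩⟩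
        omega
      · have h1 := lt_auxTri_auxIdx_succ x
        have h2 := auxTri_auxIdx_le y
        have h3 := auxTri_mono (show auxIdx x + 1 ≤ auxIdx y from hlt)
        omega
    have hpar1 := hUpar y hy
    have hpar2 := hUpar x hx
    have hab2 : auxIdx y + 2 ≤ auxIdx x := by omega
    have h1 : auxTri (auxIdx y + 2) ≤ x := le_trans (auxTri_mono hab2) (auxTri_auxIdx_le x)
    have h2 : y < auxTri (auxIdx y + 1) := lt_auxTri_auxIdx_succ y
    have h3 : auxTri (auxIdx y + 2) = auxTri (auxIdx y + 1) + (auxIdx y + 2) := auxTri_succ _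
    omega
  -- shift invariance iterated
  have hshift : ∀ (i : ℕ) (B : Set ℕ), ν ((fun x => x + i) '' B) = ν B := by
    intro i
    induction i with
    | zero => intro B; simp
    | succ i ih =>
      intro B
      have he : (fun x => x + (i+1)) '' B = (fun n => n + 1) '' ((fun x => x + i) '' B) := by
        rw [Set.image_image]
        exact Set.image_congr (fun x _ => by omega)
      rw [he, hSI, ih]
  -- final contradiction
  obtain ⟨m, hm⟩ := exists_nat_gt (1 / ν U)
  set U' : Set ℕ := U ∩ Set.Ici (auxTri m) with hU'def
  have hU' : ν U' = ν U := by
    have hsplit : U = U' ∪ (U ∩ Set.Iio (auxTri m)) := by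
      ext x
      simp only [hU'def, Set.mem_union, Set.mem_inter_iff, Set.mem_Ici, Set.mem_Iio]
      constructor
      · intro h
        rcases lt_or_ge x (auxTri m) with h' | h'
        · exact Or.inr ⟨h, h'⟩
        · exact Or.inl ⟨h, h'⟩
      · rintro (⟨h, _⟩ | ⟨h, _⟩) <;> exact h
    have hd : Disjoint U' (U ∩ Set.Iio (auxTri m)) := by
      rw [Set.disjoint_left]; rintro x ⟨_, h1⟩ ⟨_, h2⟩
      simp only [Set.mem_Ici] at h1; simp only [Set.mem_Iio] at h2; omega
    have h2 := hν.2.2 _ _ hd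
    rw [← hsplit] at h2
    have h3 : ν (U ∩ Set.Iio (auxTri m)) = 0 :=
      hνfree _ ((Set.finite_Iio _).inter_of_right _)
    linarith
  set g : ℕ → Set ℕ := fun i => (fun x => x + i) '' U' with hg
  have hgd : ∀ i j, i < j → j < m + 1 → Disjoint (g i) (g j) := by
    intro i j hij hj
    rw [Set.disjoint_left]
    rintro z ⟨x, hx, rfl⟩ ⟨y, hy, hxy⟩
    simp only at hxy
    have hyx : y < x := by omega
    have := hgap m x hx.1 y hy.1 hyx hy.2
    omega
  have hsum2 := measure_biUnion hν g (m+1) hgd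
  have hgv : ∀ i, ν (g i) = ν U := fun i => by rw [hg]; simp only; rw [hshift i U', hU']
  have hle1 : ν (⋃ i ∈ Finset.range (m+1), g i) ≤ 1 := by
    have := measure_mono hν (Set.subset_univ (⋃ i ∈ Finset.range (m+1), g i))
    rw [hν.2.1] at this; exact this
  rw [hsum2] at hle1
  simp only [hgv, Finset.sum_const, Finset.card_range, nsmul_eq_mul] at hle1
  have h1 : (1 : ℝ) < m * ν U := (div_lt_iff₀ hUpos).mp hm
  push_cast at hle1
  nlinarith [hUpos]

lemma sqrt_bound_tendsto :
    Tendsto (fun n : ℕ => (Real.sqrt (2 * n) + 1) / n) atTop (nhds 0) := by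
  have a0 : Tendsto (fun n : ℕ => Real.sqrt n) atTop atTop := by
    apply tendsto_atTop_atTop.mpr
    intro b
    refine ⟨(⌈b⌉₊) ^ 2, fun n hn => ?_⟩
    calc b ≤ (⌈b⌉₊ : ℝ) := Nat.le_ceil b
      _ = Real.sqrt ((⌈b⌉₊ : ℝ) ^ 2) := (Real.sqrt_sq (by positivity)).symm
      _ ≤ Real.sqrt n := Real.sqrt_le_sqrt (by exact_mod_cast hn)
  have a1 : Tendsto (fun n : ℕ => (Real.sqrt n)⁻¹) atTop (nhds 0) :=
    a0.inv_tendsto_atTop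
  have a2 : Tendsto (fun n : ℕ => (n : ℝ)⁻¹) atTop (nhds 0) :=
    tendsto_inv_atTop_nhds_zero_nat
  have e1 : Tendsto (fun n : ℕ => Real.sqrt 2 * (Real.sqrt n)⁻¹ + (n : ℝ)⁻¹) atTop
      (nhds 0) := by
    have := (a1.const_mul (Real.sqrt 2)).add a2
    simpa using this
  apply Tendsto.congr' _ e1
  filter_upwards [eventually_ge_atTop 1] with n hn
  have hn0 : (0 : ℝ) < n := by exact_mod_cast Nat.lt_of_lt_of_le Nat.zero_lt_one hn
  have hs : Real.sqrt n * Real.sqrt n = n := Real.mul_self_sqrt (le_of_lt hn0)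
  have hs0 : (0 : ℝ) < Real.sqrt n := Real.sqrt_pos.mpr hn0
  rw [Real.sqrt_mul (by norm_num) (n : ℝ)]
  field_simp
  linear_combination (-Real.sqrt 2) * hs

lemma no_density {μ ν : Set ℕ → ℝ} {f : ℕ → ℕ} (hμ : IsMeasure μ) (hfree : IsFree μ)
    (hQ : IsQPlusMeasure μ) (hν : IsMeasure ν) (hED : ExtendsDensity ν)
    (hf : FinToOne f) (hpush : ∀ A, μ (f ⁻¹' A) = ν A) : False := by
  obtain ⟨T, hTpos, hTsub⟩ := exists_sparse hμ hQ hf hpush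
  have hcard : ∀ m n, n ≤ auxTri m → (T ∩ Set.Iio n).ncard ≤ m := by
    intro m
    induction m with
    | zero =>
      intro n hn
      have hn0 : n = 0 := by simpa [auxTri] using hn
      subst hn0
      have : Set.Iio 0 = (∅ : Set ℕ) := by ext x; simp
      simp [this]
    | succ m ih =>
      intro n hn
      rcases le_or_gt n (auxTri m) with h | h
      · exact le_trans (ih n h) (Nat.le_succ m)
      · have hsub : T ∩ Set.Iio n ⊆
            (T ∩ Set.Iio (auxTri m)) ∪ (T ∩ Set.Ico (auxTri m) (auxTri (m+1))) := by
          rintro x ⟨hxT, hxn⟩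
          simp only [Set.mem_Iio] at hxn
          rcases lt_or_ge x (auxTri m) with h' | h'
          · exact Or.inl ⟨hxT, h'⟩
          · exact Or.inr ⟨hxT, h', by omega⟩
        have h1 : (T ∩ Set.Iio (auxTri m)).Finite := (Set.finite_Iio _).inter_of_right _
        have h2 : (T ∩ Set.Ico (auxTri m) (auxTri (m+1))).Finite :=
          (Set.finite_Ico _ _).inter_of_right _
        calc (T ∩ Set.Iio n).ncard
            ≤ ((T ∩ Set.Iio (auxTri m)) ∪ (T ∩ Set.Ico (auxTri m) (auxTri (m+1)))).ncard :=
              Set.ncard_le_ncard hsub (h1.union h2)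
          _ ≤ (T ∩ Set.Iio (auxTri m)).ncard + (T ∩ Set.Ico (auxTri m) (auxTri (m+1))).ncard :=
              Set.ncard_union_le _ _
          _ ≤ m + 1 := add_le_add (ih _ le_rfl) (subsingleton_ncard_le_one (hTsub m))
  have hcard2 : ∀ n, (T ∩ Set.Iio n).ncard ≤ Nat.sqrt (2 * n) + 1 := by
    intro n
    apply hcard
    have h1 : 2 * n < (Nat.sqrt (2 * n) + 1) * (Nat.sqrt (2 * n) + 1) := Nat.lt_succ_sqrt (2 * n)
    have h2 := two_auxTri (Nat.sqrt (2 * n) + 1)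
    have h3 : (Nat.sqrt (2 * n) + 1) * (Nat.sqrt (2 * n) + 1 + 1)
        = (Nat.sqrt (2 * n) + 1) * (Nat.sqrt (2 * n) + 1) + (Nat.sqrt (2 * n) + 1) :=
      Nat.mul_succ _ _
    omega
  have hT0 : ν T = 0 := by
    apply hED T 0
    apply squeeze_zero' (g := fun n : ℕ => (Real.sqrt (2 * n) + 1) / n)
    · filter_upwards with n; positivity
    · filter_upwards [eventually_ge_atTop 1] with n hn
      have hn0 : (0 : ℝ) < n := by exact_mod_cast Nat.lt_of_lt_of_le Nat.zero_lt_one hn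
      have hnum : ((T ∩ Set.Iio n).ncard : ℝ) ≤ Real.sqrt (2 * n) + 1 := by
        have h1 := hcard2 n
        have h2 : ((Nat.sqrt (2 * n) : ℝ)) ≤ Real.sqrt ((2 * n : ℕ) : ℝ) :=
          Real.nat_sqrt_le_real_sqrt
        have h3 : ((2 * n : ℕ) : ℝ) = 2 * (n : ℝ) := by push_cast; ring
        rw [h3] at h2
        calc ((T ∩ Set.Iio n).ncard : ℝ) ≤ ((Nat.sqrt (2 * n) + 1 : ℕ) : ℝ) := by
              exact_mod_cast h1
          _ = (Nat.sqrt (2 * n) : ℝ) + 1 := by push_cast; ring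
          _ ≤ Real.sqrt (2 * n) + 1 := by linarith
      gcongr
    · exact sqrt_bound_tendsto
  linarith


/-- A free Q⁺-measure is neither nearly shift invariant nor RB-above a measure
extending the asymptotic density. -/
theorem stmt_15 (μ : Set ℕ → ℝ) (hμ : IsMeasure μ) (hfree : IsFree μ)
    (hQ : IsQPlusMeasure μ) :
    (¬∃ ν : Set ℕ → ℝ, IsMeasure ν ∧ ShiftInvariant ν ∧ RBLe ν μ) ∧
    (¬∃ ν : Set ℕ → ℝ, IsMeasure ν ∧ ExtendsDensity ν ∧ RBLe ν μ) := by
  constructor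
  · rintro ⟨ν, hν, hSI, f, hf, hpush⟩
    exact no_shift hμ hfree hQ hν hSI hf hpush
  · rintro ⟨ν, hν, hED, f, hf, hpush⟩
    exact no_density hμ hfree hQ hν hED hf hpush
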